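/- The function E(λ) = ∫_0^1 e^{λC(t)} dt satisfies the recurrence E(λ) = Σ_{k=1}^m Δ_{2k−1} e^{h_{k−1}λ} E(ρ_k λ) + Σ_{k=1}^{m−1} Δ_{2k} e^{h_k λ}, where Δ_{2k−1} = b_k − a_k, Δ_{2k} = a_{k+1} − b_k, and h_k = ρ_1 + … + ρ_k. -/

import Mathlib

open Set Finset

/-- The recurrence relation for `E(λ) = ∫_0^1 e^{λ C(t)} dt`:
`E(λ) = ∑_{k=1}^m Δ_{2k-1} e^{h_{k-1} λ} E(ρ_k λ) + ∑_{k=1}^{m-1} Δ_{2k} e^{h_k λ}`.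
Steps are indexed by `k = 0, …, m-1`, so `Δ_{2k-1} = b k - a k`,
`Δ_{2k} = a (k+1) - b k`, `h_{k-1} = ∑_{j<k} ρ j`. -/
theorem cantorLadder_E_recurrence
    (m : ℕ) (a b ρ : ℕ → ℝ) (C : ℝ → ℝ)
    (hm : 1 ≤ m)
    (ha0 : a 0 = 0) (hbm : b (m - 1) = 1)
    (hab : ∀ k < m, a k < b k)
    (horder : ∀ k, k + 1 < m → b k ≤ a (k + 1))
    (hρpos : ∀ k < m, 0 < ρ k)
    (hρsum : ∑ j ∈ Finset.range m, ρ j = 1)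
    (hcont : ContinuousOn C (Set.Icc 0 1))
    (hstep : ∀ k < m, ∀ t ∈ Set.Icc (a k) (b k),
      C t = (∑ j ∈ Finset.range k, ρ j) + ρ k * C ((t - a k) / (b k - a k)))
    (hgap : ∀ k, k + 1 < m → ∀ t ∈ Set.Icc (b k) (a (k + 1)),
      C t = ∑ j ∈ Finset.range (k + 1), ρ j)
    (lam : ℝ) :
    (∫ t in (0:ℝ)..1, Real.exp (lam * C t)) =
      (∑ k ∈ Finset.range m, (b k - a k) *
          Real.exp ((∑ j ∈ Finset.range k, ρ j) * lam) *
          ∫ t in (0:ℝ)..1, Real.exp (ρ k * lam * C t))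
      + ∑ k ∈ Finset.range (m - 1), (a (k + 1) - b k) *
          Real.exp ((∑ j ∈ Finset.range (k + 1), ρ j) * lam) := by
  set f : ℝ → ℝ := fun t => Real.exp (lam * C t) with hf
  -- monotonicity of b
  have hmono_b : ∀ i j : ℕ, i ≤ j → j < m → b i ≤ b j := by
    intro i j hij hj
    induction j with
    | zero => interval_cases i; exact le_refl _
    | succ n ih =>
      rcases Nat.eq_or_lt_of_le hij with h | h
      · rw [h]
      · have hin : i ≤ n := Nat.lt_succ_iff.mp h
        have hn : n < m := lt_trans (Nat.lt_succ_self n) hj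
        calc b i ≤ b n := ih hin hn
          _ ≤ a (n + 1) := horder n hj
          _ ≤ b (n + 1) := (hab _ hj).le
  have ha_nonneg : ∀ j, j < m → 0 ≤ a j := by
    intro j hj
    induction j with
    | zero => rw [ha0]
    | succ n ih =>
      have hn : n < m := lt_trans (Nat.lt_succ_self n) hj
      calc (0:ℝ) ≤ a n := ih hn
        _ ≤ b n := (hab n hn).le
        _ ≤ a (n + 1) := horder n hj
  have hb_le : ∀ k, k < m → b k ≤ 1 := by
    intro k hk
    rw [← hbm]
    exact hmono_b k (m - 1) (Nat.le_sub_one_of_lt hk) (Nat.sub_lt hm one_pos)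
  have hamem : ∀ k, k < m → a k ∈ Set.Icc (0:ℝ) 1 :=
    fun k hk => ⟨ha_nonneg k hk, le_trans (hab k hk).le (hb_le k hk)⟩
  have hbmem : ∀ k, k < m → b k ∈ Set.Icc (0:ℝ) 1 :=
    fun k hk => ⟨le_trans (ha_nonneg k hk) (hab k hk).le, hb_le k hk⟩
  -- integrability on subintervals
  have hint : ∀ c d : ℝ, c ∈ Set.Icc (0:ℝ) 1 → d ∈ Set.Icc (0:ℝ) 1 →
      IntervalIntegrable f MeasureTheory.volume c d := by
    intro c d hc hd
    have hsub : Set.uIcc c d ⊆ Set.Icc (0:ℝ) 1 := by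
      rw [← Set.uIcc_of_le (zero_le_one' ℝ)]
      exact Set.uIcc_subset_uIcc (by rwa [Set.uIcc_of_le (zero_le_one' ℝ)])
        (by rwa [Set.uIcc_of_le (zero_le_one' ℝ)])
    show IntervalIntegrable (fun t => Real.exp (lam * C t)) MeasureTheory.volume c d
    exact ((continuousOn_const.mul (hcont.mono hsub)).rexp).intervalIntegrable
  -- step interval integrals
  have hA : ∀ k, k < m → (∫ t in a k..b k, f t) =
      (b k - a k) * Real.exp ((∑ j ∈ Finset.range k, ρ j) * lam) *
        ∫ t in (0:ℝ)..1, Real.exp (ρ k * lam * C t) := by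
    intro k hk
    have hΔ : (0:ℝ) < b k - a k := sub_pos.mpr (hab k hk)
    have h1 : (∫ t in a k..b k, f t) =
        ∫ t in a k..b k, Real.exp ((∑ j ∈ Finset.range k, ρ j) * lam) *
          Real.exp (ρ k * lam * C (t / (b k - a k) - a k / (b k - a k))) := by
      apply intervalIntegral.integral_congr
      intro t ht
      rw [Set.uIcc_of_le (hab k hk).le] at ht
      have hC := hstep k hk t ht
      have harg : t / (b k - a k) - a k / (b k - a k) = (t - a k) / (b k - a k) := by
        rw [div_sub_div_same]
      show Real.exp (lam * C t) = Real.exp ((∑ j ∈ Finset.range k, ρ j) * lam) *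
          Real.exp (ρ k * lam * C (t / (b k - a k) - a k / (b k - a k)))
      rw [harg, hC, ← Real.exp_add]
      congr 1
      ring
    rw [h1, intervalIntegral.integral_const_mul]
    have h2 : (∫ t in a k..b k,
        Real.exp (ρ k * lam * C (t / (b k - a k) - a k / (b k - a k)))) =
        (b k - a k) * ∫ t in (0:ℝ)..1, Real.exp (ρ k * lam * C t) := by
      have := intervalIntegral.integral_comp_div_sub
        (a := a k) (b := b k) (f := fun s => Real.exp (ρ k * lam * C s))
        hΔ.ne' (a k / (b k - a k))
      rw [this, sub_self, div_sub_div_same, div_self hΔ.ne', smul_eq_mul]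
    rw [h2]
    ring
  -- gap interval integrals
  have hB : ∀ k, k + 1 < m → (∫ t in b k..a (k + 1), f t) =
      (a (k + 1) - b k) * Real.exp ((∑ j ∈ Finset.range (k + 1), ρ j) * lam) := by
    intro k hk
    have hle := horder k hk
    have h1 : (∫ t in b k..a (k + 1), f t) =
        ∫ t in b k..a (k + 1),
          Real.exp ((∑ j ∈ Finset.range (k + 1), ρ j) * lam) := by
      apply intervalIntegral.integral_congr
      intro t ht
      rw [Set.uIcc_of_le hle] at ht
      show Real.exp (lam * C t) = Real.exp ((∑ j ∈ Finset.range (k + 1), ρ j) * lam)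
      rw [hgap k hk t ht, mul_comm]
    rw [h1, intervalIntegral.integral_const, smul_eq_mul]
  -- main induction
  have key : ∀ n, n < m → (∫ t in (0:ℝ)..(b n), f t) =
      (∑ k ∈ Finset.range (n + 1), (b k - a k) *
          Real.exp ((∑ j ∈ Finset.range k, ρ j) * lam) *
          ∫ t in (0:ℝ)..1, Real.exp (ρ k * lam * C t))
      + ∑ k ∈ Finset.range n, (a (k + 1) - b k) *
          Real.exp ((∑ j ∈ Finset.range (k + 1), ρ j) * lam) := by
    intro n hn
    induction n with
    | zero =>
      simp only [zero_add, Finset.sum_range_one, Finset.range_zero, Finset.sum_empty, add_zero]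
      conv_lhs => rw [← ha0]
      exact hA 0 hm
    | succ n ih =>
      have hn' : n < m := lt_trans (Nat.lt_succ_self n) hn
      have hz : (0:ℝ) ∈ Set.Icc (0:ℝ) 1 := Set.left_mem_Icc.mpr zero_le_one
      have e1 : (∫ t in (0:ℝ)..(b (n+1)), f t) =
          (∫ t in (0:ℝ)..(b n), f t) + (∫ t in b n..a (n+1), f t)
            + ∫ t in a (n+1)..b (n+1), f t := by
        rw [intervalIntegral.integral_add_adjacent_intervals
            (hint 0 (b n) hz (hbmem n hn')) (hint (b n) (a (n+1)) (hbmem n hn') (hamem _ hn)),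
          intervalIntegral.integral_add_adjacent_intervals
            (hint 0 (a (n+1)) hz (hamem _ hn)) (hint (a (n+1)) (b (n+1)) (hamem _ hn) (hbmem _ hn))]
      rw [e1, ih hn', hA (n+1) hn, hB n hn, Finset.sum_range_succ
        (fun k => (b k - a k) * Real.exp ((∑ j ∈ Finset.range k, ρ j) * lam) *
          ∫ t in (0:ℝ)..1, Real.exp (ρ k * lam * C t)) (n+1),
        Finset.sum_range_succ
        (fun k => (a (k + 1) - b k) * Real.exp ((∑ j ∈ Finset.range (k + 1), ρ j) * lam)) n]
      ring
  have hfin := key (m - 1) (Nat.sub_lt hm one_pos)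
  rw [Nat.sub_add_cancel hm, hbm] at hfin
  exact hfin
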